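/- Let V be a normed space and let C be a finite index set. For each c ∈ C let V_c be equipped with a seminorm ‖·‖_c, and let u, ũ, u' ∈ V with component restrictions u_c, ũ_c, u'_c satisfying ‖u_c - u'_c‖_c ≤ η_c ‖u_c - ũ_c‖_c with 0 ≤ η_c < 1 for every c ∈ C. If moreover ‖u - ũ‖ ≤ ∑_{c∈C} ‖u_c - ũ_c‖_c (subadditivity of the global norm over components), then ‖u - ũ‖ ≤ ∑_{c∈C} (1 - η_c)⁻¹ ‖u'_c - ũ_c‖_c. -/
import Mathlib


theorem stmt_1 {V : Type*} [NormedAddCommGroup V] {ι : Type*} (C : Finset ι)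
    (Vc : ι → Type*) [∀ c, SeminormedAddCommGroup (Vc c)]
    (u utilde u' : V) (uc utildec u'c : ∀ c, Vc c) (η : ι → ℝ)
    (hη0 : ∀ c ∈ C, 0 ≤ η c) (hη1 : ∀ c ∈ C, η c < 1)
    (hcontr : ∀ c ∈ C, ‖uc c - u'c c‖ ≤ η c * ‖uc c - utildec c‖)
    (hsub : ‖u - utilde‖ ≤ ∑ c ∈ C, ‖uc c - utildec c‖) :
    ‖u - utilde‖ ≤ ∑ c ∈ C, (1 - η c)⁻¹ * ‖u'c c - utildec c‖ := by
  refine hsub.trans (Finset.sum_le_sum fun c hc => ?_)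
  have h1 : (0:ℝ) < 1 - η c := by linarith [hη1 c hc]
  have htri : ‖uc c - utildec c‖ ≤ ‖uc c - u'c c‖ + ‖u'c c - utildec c‖ := by
    calc ‖uc c - utildec c‖ = ‖(uc c - u'c c) + (u'c c - utildec c)‖ := by rw [sub_add_sub_cancel]
      _ ≤ _ := norm_add_le _ _
  have key : (1 - η c) * ‖uc c - utildec c‖ ≤ ‖u'c c - utildec c‖ := by
    nlinarith [hcontr c hc]
  rw [inv_mul_eq_div, le_div_iff₀ h1]
  linarith
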